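/- Let Δ > 0 be a non-square discriminant and ξ = (b+√Δ)/(2a) a reduced quadratic irrational of discriminant Δ (i.e., ξ > 1 and -1 < ξ' < 0, where ξ' is the conjugate), with purely periodic continued fraction ξ = [v₀, v₁, …, v_{2m-1}] of even period length 2m. Let ξ^op := ⌊ξ⌋ - ξ'. Then ξ^op = [v₀, v_{2m-1}, v_{2m-2}, …, v₁] (purely periodic) and the alternating sums of the periods agree: Σ_{i=0}^{2m-1} (-1)^i v_i for ξ equals the corresponding alternating sum for ξ^op. -/

import Mathlib

/-- The Gauss map iterates of the continued fraction algorithm. -/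
noncomputable def cfIter (ξ : ℝ) : ℕ → ℝ
  | 0 => ξ
  | n + 1 => 1 / (cfIter ξ n - ⌊cfIter ξ n⌋)

/-- The `n`-th partial quotient of the continued fraction of `ξ`. -/
noncomputable def cfDigit (ξ : ℝ) (n : ℕ) : ℤ := ⌊cfIter ξ n⌋

/-- The Galois-conjugate trajectory of the Gauss map iterates. -/
noncomputable def cfConj (ξ σ : ℝ) : ℕ → ℝ
  | 0 => σ
  | n + 1 => 1 / (cfConj ξ σ n - ⌊cfIter ξ n⌋)

lemma cfIter_add (ξ : ℝ) (k n : ℕ) : cfIter ξ (k + n) = cfIter (cfIter ξ k) n := by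
  induction n with
  | zero => rfl
  | succ n ih => show cfIter ξ ((k+n)+1) = _; rw [cfIter, ih, cfIter]

lemma cfDigit_add (ξ : ℝ) (k n : ℕ) : cfDigit ξ (k + n) = cfDigit (cfIter ξ k) n := by
  unfold cfDigit; rw [cfIter_add]

lemma cfIter_irrational {ξ : ℝ} (h : Irrational ξ) : ∀ n, Irrational (cfIter ξ n)
  | 0 => h
  | n + 1 => by
    show Irrational (1 / (cfIter ξ n - ⌊cfIter ξ n⌋))
    rw [one_div]
    exact ((cfIter_irrational h n).sub_intCast _).inv

lemma fract_ne_zero {x : ℝ} (h : Irrational x) : Int.fract x ≠ 0 := by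
  intro h0
  have : Irrational (x - ⌊x⌋) := h.sub_intCast _
  rw [show x - (⌊x⌋:ℝ) = Int.fract x from rfl, h0] at this
  exact this.ne_int 0 (by norm_num)

lemma fract_pos {x : ℝ} (h : Irrational x) : 0 < Int.fract x :=
  lt_of_le_of_ne (Int.fract_nonneg x) (Ne.symm (fract_ne_zero h))

lemma one_lt_cfIter {ξ : ℝ} (h : Irrational ξ) (h1 : 1 < ξ) : ∀ n, 1 < cfIter ξ n
  | 0 => h1
  | n + 1 => by
    show 1 < 1 / (cfIter ξ n - ⌊cfIter ξ n⌋)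
    have hf : 0 < Int.fract (cfIter ξ n) := fract_pos (cfIter_irrational h n)
    have hf1 : Int.fract (cfIter ξ n) < 1 := Int.fract_lt_one _
    rw [show cfIter ξ n - (⌊cfIter ξ n⌋:ℝ) = Int.fract (cfIter ξ n) from rfl]
    exact one_lt_one_div hf hf1

open GenContFract in
lemma stream_eq {ξ : ℝ} (h : Irrational ξ) :
    ∀ n, IntFractPair.stream ξ n = some (IntFractPair.of (cfIter ξ n))
  | 0 => by rfl
  | n + 1 => by
    have hfr : (IntFractPair.of (cfIter ξ n)).fr ≠ 0 :=
      fract_ne_zero (cfIter_irrational h n)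
    rw [IntFractPair.stream_succ_of_some (stream_eq h n) hfr]
    congr 2
    show (Int.fract (cfIter ξ n))⁻¹ = cfIter ξ (n + 1)
    rw [show cfIter ξ (n+1) = 1 / (cfIter ξ n - ⌊cfIter ξ n⌋) from rfl, one_div]
    rfl

open GenContFract in
lemma cf_determined {ξ η : ℝ} (hξ : Irrational ξ) (hη : Irrational η)
    (h : ∀ n, cfDigit ξ n = cfDigit η n) : ξ = η := by
  have hof : GenContFract.of ξ = GenContFract.of η := by
    have hh : (GenContFract.of ξ).h = (GenContFract.of η).h := by
      rw [of_h_eq_floor, of_h_eq_floor]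
      exact_mod_cast h 0
    have hs : (GenContFract.of ξ).s = (GenContFract.of η).s := by
      apply Stream'.Seq.ext
      intro n
      have h1 := get?_of_eq_some_of_succ_get?_intFractPair_stream (stream_eq hξ (n+1))
      have h2 := get?_of_eq_some_of_succ_get?_intFractPair_stream (stream_eq hη (n+1))
      rw [h1, h2]
      congr 2
      show ((⌊cfIter ξ (n+1)⌋ : ℤ) : ℝ) = ((⌊cfIter η (n+1)⌋ : ℤ) : ℝ)
      exact_mod_cast h (n+1)
    exact GenContFract.ext hh hs
  have t1 := of_convergence ξ
  have t2 := of_convergence η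
  rw [hof] at t1
  exact tendsto_nhds_unique t1 t2

lemma conj_invariant {Δ : ℤ} (hΔ : 0 ≤ (Δ:ℝ)) (hirr : Irrational (Real.sqrt Δ))
    (ξ σ : ℝ) (hξirr : Irrational ξ) (h1 : 1 < ξ)
    (p₀ q₀ : ℚ) (hq₀ : q₀ ≠ 0) (hrep0 : ξ = p₀ + q₀ * Real.sqrt Δ)
    (hrep0' : σ = p₀ - q₀ * Real.sqrt Δ)
    (hσ1 : -1 < σ) (hσ2 : σ < 0) :
    ∀ n, (∃ p q : ℚ, q ≠ 0 ∧ cfIter ξ n = p + q * Real.sqrt Δ ∧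
            cfConj ξ σ n = p - q * Real.sqrt Δ)
         ∧ -1 < cfConj ξ σ n ∧ cfConj ξ σ n < 0 := by
  have hsq : Real.sqrt Δ ^ 2 = (Δ:ℝ) := Real.sq_sqrt hΔ
  intro n
  induction n with
  | zero => exact ⟨⟨p₀, q₀, hq₀, hrep0, hrep0'⟩, hσ1, hσ2⟩
  | succ n ih =>
    obtain ⟨⟨p, q, hq, hx, hc⟩, hs1, hs2⟩ := ih
    set v : ℤ := ⌊cfIter ξ n⌋ with hv
    have hv1 : 1 ≤ v := Int.le_floor.mpr (by exact_mod_cast (one_lt_cfIter hξirr h1 n).le)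
    have hcv : cfConj ξ σ n - v < -1 := by
      have : (1:ℝ) ≤ v := by exact_mod_cast hv1
      linarith
    have hstep : cfConj ξ σ (n+1) = 1 / (cfConj ξ σ n - v) := rfl
    have hb1 : -1 < cfConj ξ σ (n+1) := by
      rw [hstep]
      rw [lt_div_iff_of_neg (by linarith : cfConj ξ σ n - (v:ℝ) < 0)]
      linarith
    have hb2 : cfConj ξ σ (n+1) < 0 := by
      rw [hstep]
      exact div_neg_of_pos_of_neg one_pos (by linarith)
    have hxv : cfIter ξ n - v ≠ 0 := by
      have := fract_ne_zero (cfIter_irrational hξirr n)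
      rwa [Int.fract, ← hv] at this
    set A : ℚ := p - v with hA
    have hxA : cfIter ξ n - v = (A:ℝ) + q * Real.sqrt Δ := by push_cast [hA]; rw [hx]; ring
    have hcA : cfConj ξ σ n - v = (A:ℝ) - q * Real.sqrt Δ := by push_cast [hA]; rw [hc]; ring
    set D : ℚ := A^2 - q^2 * Δ with hD
    have hDr : ((A:ℝ) + q * Real.sqrt Δ) * ((A:ℝ) - q * Real.sqrt Δ) = (D:ℝ) := by
      push_cast [hD]; nlinarith [hsq]
    have hDne : D ≠ 0 := by
      intro h0
      have : ((A:ℝ) - q * Real.sqrt Δ) = 0 := by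
        rcases mul_eq_zero.mp (by rw [hDr, h0]; norm_num :
            ((A:ℝ) + q * Real.sqrt Δ) * ((A:ℝ) - q * Real.sqrt Δ) = 0) with h|h
        · exact absurd h (by rw [← hxA]; exact hxv)
        · exact h
      apply hirr
      refine ⟨A / q, ?_⟩
      have hqR : (q:ℝ) ≠ 0 := by exact_mod_cast hq
      push_cast
      field_simp at this ⊢
      linarith
    refine ⟨⟨A / D, -q / D, by simp [hq, hDne], ?_, ?_⟩, hb1, hb2⟩
    · show 1 / (cfIter ξ n - v) = _
      rw [hxA]
      have hDR : (D:ℝ) ≠ 0 := by exact_mod_cast hDne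
      have hne : (A:ℝ) + q * Real.sqrt Δ ≠ 0 := by rw [← hxA]; exact hxv
      push_cast
      field_simp
      nlinarith [hsq]
    · rw [hstep, hcA]
      have hDR : (D:ℝ) ≠ 0 := by exact_mod_cast hDne
      have hne : (A:ℝ) - q * Real.sqrt Δ ≠ 0 := by
        intro h0
        apply hDne
        have : (D:ℝ) = 0 := by rw [← hDr, h0, mul_zero]
        exact_mod_cast this
      push_cast
      field_simp
      nlinarith [hsq]

section Eta
variable (ξ σ : ℝ) (hinv : ∀ n, -1 < cfConj ξ σ n ∧ cfConj ξ σ n < 0)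
  (hv : ∀ n, 1 ≤ ⌊cfIter ξ n⌋)

include hinv hv

lemma eta_succ (t : ℕ) :
    -1 / cfConj ξ σ (t+1) = (⌊cfIter ξ t⌋ : ℝ) - cfConj ξ σ t := by
  have h1 : cfConj ξ σ (t+1) = 1 / (cfConj ξ σ t - ⌊cfIter ξ t⌋) := rfl
  have hne : cfConj ξ σ t - (⌊cfIter ξ t⌋ : ℝ) ≠ 0 := by
    have := (hinv t).2
    have h2 : (1:ℝ) ≤ ⌊cfIter ξ t⌋ := by exact_mod_cast hv t
    intro h0; linarith [sub_eq_zero.mp h0]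
  rw [h1]
  field_simp
  ring

lemma floor_eta (t : ℕ) : ⌊-1 / cfConj ξ σ (t+1)⌋ = cfDigit ξ t := by
  rw [eta_succ ξ σ hinv hv t]
  have h1 := (hinv t).1
  have h2 := (hinv t).2
  rw [show (⌊cfIter ξ t⌋ : ℝ) - cfConj ξ σ t = (⌊cfIter ξ t⌋ : ℝ) + (- cfConj ξ σ t) by ring,
    Int.floor_intCast_add]
  have : ⌊-cfConj ξ σ t⌋ = 0 := Int.floor_eq_zero_iff.mpr ⟨by linarith, by linarith⟩
  rw [this, add_zero]; rfl

lemma iter_eta : ∀ j k, j ≤ k →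
    cfIter (-1 / cfConj ξ σ k) j = -1 / cfConj ξ σ (k - j) := by
  intro j
  induction j with
  | zero => intro k _; rfl
  | succ j ih =>
    intro k hjk
    have hj : j ≤ k := by omega
    have hstep : cfIter (-1 / cfConj ξ σ k) (j+1)
        = 1 / (cfIter (-1 / cfConj ξ σ k) j - ⌊cfIter (-1 / cfConj ξ σ k) j⌋) := rfl
    obtain ⟨t, ht⟩ : ∃ t, k - j = t + 1 := ⟨k - j - 1, by omega⟩
    have ht' : k - (j+1) = t := by omega
    rw [hstep, ih k hj, ht, ht', floor_eta ξ σ hinv hv t, eta_succ ξ σ hinv hv t]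
    have : ((⌊cfIter ξ t⌋:ℝ) - cfConj ξ σ t) - (cfDigit ξ t : ℝ) = - cfConj ξ σ t := by
      show _ - ((⌊cfIter ξ t⌋ : ℤ) : ℝ) = _; ring
    rw [this, div_neg, neg_div]

lemma digit_eta (j k : ℕ) (hjk : j < k) :
    cfDigit (-1 / cfConj ξ σ k) j = cfDigit ξ (k - j - 1) := by
  unfold cfDigit
  rw [iter_eta ξ σ hinv hv j k hjk.le]
  obtain ⟨t, ht⟩ : ∃ t, k - j = t + 1 := ⟨k - j - 1, by omega⟩
  rw [ht]
  simp only [Nat.add_sub_cancel]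
  exact floor_eta ξ σ hinv hv t

end Eta

lemma neg_one_pow_congr' {s t : ℕ} (h : Even (s + t)) : ((-1:ℤ))^s = (-1)^t := by
  have h1 : ((-1:ℤ))^(s+t) = 1 := h.neg_one_pow
  rw [pow_add] at h1
  have h2 : ((-1:ℤ))^t * (-1)^t = 1 := by
    rw [← pow_add]; exact (Even.add_self t).neg_one_pow
  calc ((-1:ℤ))^s = (-1)^s * ((-1)^t * (-1)^t) := by rw [h2, mul_one]
    _ = ((-1)^s * (-1)^t) * (-1)^t := by ring
    _ = (-1)^t := by rw [h1, one_mul]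

theorem inverse_period_alternating_sum (Δ a b c : ℤ) (hΔ : 0 < Δ) (hsq : ¬ IsSquare Δ)
    (ha : a ≠ 0) (hdisc : b ^ 2 - 4 * a * c = Δ)
    (hprim : Int.gcd (Int.gcd a b) c = 1)
    (ξ ξ' : ℝ) (hξ : ξ = ((b : ℝ) + Real.sqrt Δ) / (2 * a))
    (hξ' : ξ' = ((b : ℝ) - Real.sqrt Δ) / (2 * a))
    (hred1 : 1 < ξ) (hred2 : -1 < ξ') (hred3 : ξ' < 0)
    (m : ℕ) (hm : 0 < m)
    (hper : ∀ n, cfDigit ξ (n + 2 * m) = cfDigit ξ n)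
    (hminper : ∀ l : ℕ, 0 < l → (∀ n, cfDigit ξ (n + l) = cfDigit ξ n) → 2 * m ≤ l) :
    (∀ n, cfDigit ((⌊ξ⌋ : ℝ) - ξ') (n + 2 * m) = cfDigit ((⌊ξ⌋ : ℝ) - ξ') n) ∧
    cfDigit ((⌊ξ⌋ : ℝ) - ξ') 0 = cfDigit ξ 0 ∧
    (∀ i, 1 ≤ i → i < 2 * m → cfDigit ((⌊ξ⌋ : ℝ) - ξ') i = cfDigit ξ (2 * m - i)) ∧
    ∑ i ∈ Finset.range (2 * m), (-1 : ℤ) ^ i * cfDigit ξ i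
      = ∑ i ∈ Finset.range (2 * m), (-1 : ℤ) ^ i * cfDigit ((⌊ξ⌋ : ℝ) - ξ') i := by
  have hΔR : (0:ℝ) ≤ (Δ:ℝ) := by exact_mod_cast hΔ.le
  have hsqrt : Irrational (Real.sqrt Δ) :=
    irrational_sqrt_intCast_iff.mpr ⟨hsq, hΔ.le⟩
  have haR : (a:ℝ) ≠ 0 := Int.cast_ne_zero.mpr ha
  have h2a : ((2 * a : ℤ) : ℝ) = 2 * a := by push_cast; ring
  have hξirr : Irrational ξ := by
    rw [hξ, ← h2a]
    exact (hsqrt.intCast_add b).div_intCast (by omega)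
  -- base representation
  set p₀ : ℚ := (b : ℚ) / (2 * a) with hp₀
  set q₀ : ℚ := 1 / (2 * (a : ℚ)) with hq₀def
  have haQ : (a:ℚ) ≠ 0 := Int.cast_ne_zero.mpr ha
  have hq₀ : q₀ ≠ 0 := by simp [hq₀def, haQ]
  have hrep0 : ξ = (p₀:ℝ) + (q₀:ℝ) * Real.sqrt Δ := by
    rw [hξ, hp₀, hq₀def]
    push_cast
    field_simp
  have hrep0' : ξ' = (p₀:ℝ) - (q₀:ℝ) * Real.sqrt Δ := by
    rw [hξ', hp₀, hq₀def]
    push_cast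
    field_simp
  have hInv := conj_invariant hΔR hsqrt ξ ξ' hξirr hred1 p₀ q₀ hq₀ hrep0 hrep0' hred2 hred3
  have hinvB : ∀ n, -1 < cfConj ξ ξ' n ∧ cfConj ξ ξ' n < 0 := fun n => (hInv n).2
  have hvd : ∀ n, 1 ≤ ⌊cfIter ξ n⌋ := fun n =>
    Int.le_floor.mpr (by exact_mod_cast (one_lt_cfIter hξirr hred1 n).le)
  -- cfIter ξ (2m) = ξ
  have hξ2m : cfIter ξ (2 * m) = ξ := by
    apply cf_determined (cfIter_irrational hξirr _) hξirr
    intro n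
    rw [← cfDigit_add, Nat.add_comm]
    exact hper n
  -- conjugate also returns: cfConj ξ ξ' (2m) = ξ'
  have hσ2m : cfConj ξ ξ' (2 * m) = ξ' := by
    obtain ⟨⟨P, Q, hQ, hP1, hP2⟩, _, _⟩ := hInv (2 * m)
    rw [hξ2m, hrep0] at hP1
    have hQq : Q = q₀ := by
      by_contra hne
      apply hsqrt
      refine ⟨(p₀ - P) / (Q - q₀), ?_⟩
      have hQR : ((Q:ℝ) - (q₀:ℝ)) ≠ 0 := by
        intro h0
        exact hne (by exact_mod_cast sub_eq_zero.mp h0)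
      push_cast
      field_simp
      linarith
    have hPp : (P:ℝ) = (p₀:ℝ) := by
      rw [hQq] at hP1
      linarith
    rw [hP2, hQq, hPp, ← hrep0']
  have hσ0 : cfConj ξ ξ' 0 = ξ' := rfl
  -- the op value
  set xop : ℝ := (⌊ξ⌋ : ℝ) - ξ' with hxop
  have hd0 : cfDigit ξ 0 = ⌊ξ⌋ := rfl
  have hfloor_op : ⌊xop⌋ = ⌊ξ⌋ := by
    rw [hxop, show (⌊ξ⌋ : ℝ) - ξ' = (⌊ξ⌋ : ℝ) + (-ξ') by ring, Int.floor_intCast_add]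
    have : ⌊-ξ'⌋ = 0 := Int.floor_eq_zero_iff.mpr ⟨by linarith, by linarith⟩
    rw [this, add_zero]
  have hdop0 : cfDigit xop 0 = cfDigit ξ 0 := by
    show ⌊xop⌋ = cfDigit ξ 0
    rw [hfloor_op, hd0]
  have hξ'ne : ξ' ≠ 0 := hred3.ne
  have hiter1 : cfIter xop 1 = -1 / cfConj ξ ξ' 0 := by
    show 1 / (xop - ⌊xop⌋) = _
    rw [hfloor_op, hσ0, hxop]
    rw [show (⌊ξ⌋:ℝ) - ξ' - (⌊ξ⌋:ℝ) = -ξ' by ring, div_neg, neg_div]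
  have hdig_op : ∀ j, cfDigit xop (j+1) = cfDigit (-1 / cfConj ξ ξ' 0) j := by
    intro j
    rw [show j + 1 = 1 + j by omega, cfDigit_add, hiter1]
  have hη2m : -1 / cfConj ξ ξ' (2*m) = -1 / cfConj ξ ξ' 0 := by rw [hσ2m, hσ0]
  -- values of the digits of η within one period
  have hdig_eta : ∀ j, j < 2*m → cfDigit (-1 / cfConj ξ ξ' 0) j = cfDigit ξ (2*m - j - 1) := by
    intro j hj
    rw [← hη2m]
    exact digit_eta ξ ξ' hinvB hvd j (2*m) hj
  -- periodicity of η digits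
  have hiter_eta0 : cfIter (-1 / cfConj ξ ξ' 0) (2*m) = -1 / cfConj ξ ξ' 0 := by
    have h := iter_eta ξ ξ' hinvB hvd (2*m) (2*m) le_rfl
    rw [Nat.sub_self] at h
    rw [← hη2m]
    rw [h]
    exact hη2m.symm
  have hdig_eta_per : ∀ n, cfDigit (-1 / cfConj ξ ξ' 0) (n + 2*m)
      = cfDigit (-1 / cfConj ξ ξ' 0) n := by
    intro n
    rw [Nat.add_comm, cfDigit_add, hiter_eta0]
  -- Goal 2
  have G2 : cfDigit xop 0 = cfDigit ξ 0 := hdop0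
  -- Goal 3
  have G3 : ∀ i, 1 ≤ i → i < 2 * m → cfDigit xop i = cfDigit ξ (2 * m - i) := by
    intro i hi1 hi2
    obtain ⟨j, rfl⟩ : ∃ j, i = j + 1 := ⟨i - 1, by omega⟩
    rw [hdig_op j, hdig_eta j (by omega)]
    exact congrArg (cfDigit ξ) (by omega)
  -- Goal 1
  have G1 : ∀ n, cfDigit xop (n + 2 * m) = cfDigit xop n := by
    intro n
    cases n with
    | zero =>
      rw [Nat.zero_add]
      obtain ⟨j, hj⟩ : ∃ j, 2 * m = j + 1 := ⟨2*m - 1, by omega⟩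
      have h := hdig_eta j (by omega)
      rw [show 2*m - j - 1 = 0 by omega] at h
      rw [hj, hdig_op j, h, G2]
    | succ n =>
      rw [show n + 1 + 2*m = (n + 2*m) + 1 by omega, hdig_op (n + 2*m),
        hdig_eta_per n, ← hdig_op n]
  -- Goal 4
  have G4 : ∑ i ∈ Finset.range (2 * m), (-1 : ℤ) ^ i * cfDigit ξ i
      = ∑ i ∈ Finset.range (2 * m), (-1 : ℤ) ^ i * cfDigit xop i := by
    obtain ⟨k, hk⟩ : ∃ k, 2 * m = k + 1 := ⟨2*m - 1, by omega⟩
    have hrefl := Finset.sum_range_reflect (fun i => (-1 : ℤ) ^ i * cfDigit xop i) (2*m)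
    rw [← hrefl]
    conv_lhs => rw [hk, Finset.sum_range_succ']
    conv_rhs => rw [hk, Finset.sum_range_succ]
    congr 1
    · apply Finset.sum_congr rfl
      intro j hj
      have hjk : j < k := Finset.mem_range.mp hj
      have e1 : k + 1 - 1 - j = k - j := by omega
      rw [e1, G3 (k - j) (by omega) (by omega), show 2*m - (k - j) = j + 1 by omega,
        neg_one_pow_congr' (show Even (k - j + (j+1)) from ⟨m, by omega⟩)]
    · rw [show k + 1 - 1 - k = 0 by omega, G2]
  exact ⟨G1, G2, G3, G4⟩
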